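/- Let Δ = {x ∈ ℝ³ : x₁,x₂,x₃ ≥ 0, x₁+x₂+x₃ = 1}, let T_C : Δ → Δ be the Cassaigne–Selmer map, let C₁, C₂ be the Cassaigne–Selmer matrices, and define A : Δ → {C₁, C₂} by A(x) = C₁ if x₁ ≥ x₃ and A(x) = C₂ if x₃ > x₁. Then for every k ∈ ℕ and every sequence i₀, i₁, …, i_k ∈ {1,2}, the set {x ∈ Δ : A(T_C^j x) = C_{i_j} for all 0 ≤ j ≤ k} has positive measure, in the sense that its image under the projection (x₁,x₂,x₃) ↦ (x₁,x₂) has positive two-dimensional Lebesgue measure. -/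

import Mathlib

open MeasureTheory

noncomputable section

/-- The simplex `Δ = {x ∈ ℝ³ : x₁,x₂,x₃ ≥ 0, x₁+x₂+x₃ = 1}`. -/
def csSimplex : Set (ℝ × ℝ × ℝ) :=
  {x | 0 ≤ x.1 ∧ 0 ≤ x.2.1 ∧ 0 ≤ x.2.2 ∧ x.1 + x.2.1 + x.2.2 = 1}

/-- The Cassaigne–Selmer map `T_C`. -/
def casSel (x : ℝ × ℝ × ℝ) : ℝ × ℝ × ℝ :=
  if x.2.2 ≤ x.1 then
    ((x.1 - x.2.2) / (x.1 + x.2.1), x.2.2 / (x.1 + x.2.1), x.2.1 / (x.1 + x.2.1))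
  else
    (x.2.1 / (x.2.1 + x.2.2), x.1 / (x.2.1 + x.2.2), (x.2.2 - x.1) / (x.2.1 + x.2.2))

/-- The Cassaigne–Selmer matrix `C₁`. -/
def csMat₁ : Matrix (Fin 3) (Fin 3) ℤ := !![1, 1, 0; 0, 0, 1; 0, 1, 0]

/-- The Cassaigne–Selmer matrix `C₂`. -/
def csMat₂ : Matrix (Fin 3) (Fin 3) ℤ := !![0, 1, 0; 1, 0, 0; 0, 1, 1]

/-- The matrix selection map: `A(x) = C₁` if `x₁ ≥ x₃`, and `A(x) = C₂` if `x₃ > x₁`. -/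
def csA (x : ℝ × ℝ × ℝ) : Matrix (Fin 3) (Fin 3) ℤ :=
  if x.2.2 ≤ x.1 then csMat₁ else csMat₂

/-- every Cassaigne–Selmer cylinder
`{x ∈ Δ : A(T_C^j x) = C_{i_j}, 0 ≤ j ≤ k}` has positive measure, in the sense that its
projection to the first two coordinates has positive two-dimensional Lebesgue measure. -/
def Inter3 (x : ℝ × ℝ × ℝ) : Prop :=
  0 < x.1 ∧ 0 < x.2.1 ∧ 0 < x.2.2 ∧ x.1 + x.2.1 + x.2.2 = 1

def csF1 (y : ℝ × ℝ × ℝ) : ℝ × ℝ × ℝ :=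
  ((y.1 + y.2.1) / (y.1 + 2*y.2.1 + y.2.2), y.2.2 / (y.1 + 2*y.2.1 + y.2.2),
    y.2.1 / (y.1 + 2*y.2.1 + y.2.2))

def csF2 (y : ℝ × ℝ × ℝ) : ℝ × ℝ × ℝ :=
  (y.2.1 / (y.1 + 2*y.2.1 + y.2.2), y.1 / (y.1 + 2*y.2.1 + y.2.2),
    (y.2.1 + y.2.2) / (y.1 + 2*y.2.1 + y.2.2))

lemma csMat_ne : csMat₁ ≠ csMat₂ := by
  intro h
  have := congrFun (congrFun h 0) 0
  simp [csMat₁, csMat₂] at this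

lemma csF1_spec (y : ℝ × ℝ × ℝ) (hy : Inter3 y) :
    Inter3 (csF1 y) ∧ (csF1 y).2.2 < (csF1 y).1 ∧ casSel (csF1 y) = y := by
  obtain ⟨h1, h2, h3, h4⟩ := hy
  have hs : (0:ℝ) < y.1 + 2*y.2.1 + y.2.2 := by linarith
  have hs' : y.1 + 2*y.2.1 + y.2.2 ≠ 0 := ne_of_gt hs
  have hcan : ∀ a : ℝ, (a / (y.1 + 2*y.2.1 + y.2.2)) / ((1:ℝ) / (y.1 + 2*y.2.1 + y.2.2)) = a := by
    intro a; field_simp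
  have hlt : (csF1 y).2.2 < (csF1 y).1 := by
    simp only [csF1]
    exact div_lt_div_of_pos_right (by linarith) hs
  have e1 : (csF1 y).1 + (csF1 y).2.1 = 1 / (y.1 + 2*y.2.1 + y.2.2) := by
    simp only [csF1]; rw [← add_div, show y.1 + y.2.1 + y.2.2 = 1 from h4]
  refine ⟨⟨div_pos (by linarith) hs, div_pos h3 hs, div_pos h2 hs, ?_⟩, hlt, ?_⟩
  · simp only [csF1]; field_simp; linarith
  · simp only [casSel, if_pos hlt.le]
    rw [e1]
    refine Prod.ext ?_ (Prod.ext ?_ ?_)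
    · show ((csF1 y).1 - (csF1 y).2.2) / _ = y.1
      simp only [csF1]; rw [div_sub_div_same, show y.1 + y.2.1 - y.2.1 = y.1 by ring, hcan]
    · show (csF1 y).2.2 / _ = y.2.1
      simp only [csF1]; rw [hcan]
    · show (csF1 y).2.1 / _ = y.2.2
      simp only [csF1]; rw [hcan]

lemma csF2_spec (y : ℝ × ℝ × ℝ) (hy : Inter3 y) :
    Inter3 (csF2 y) ∧ (csF2 y).1 < (csF2 y).2.2 ∧ casSel (csF2 y) = y := by
  obtain ⟨h1, h2, h3, h4⟩ := hy
  have hs : (0:ℝ) < y.1 + 2*y.2.1 + y.2.2 := by linarith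
  have hs' : y.1 + 2*y.2.1 + y.2.2 ≠ 0 := ne_of_gt hs
  have hcan : ∀ a : ℝ, (a / (y.1 + 2*y.2.1 + y.2.2)) / ((1:ℝ) / (y.1 + 2*y.2.1 + y.2.2)) = a := by
    intro a; field_simp
  have hlt : (csF2 y).1 < (csF2 y).2.2 := by
    simp only [csF2]
    exact div_lt_div_of_pos_right (by linarith) hs
  have e1 : (csF2 y).2.1 + (csF2 y).2.2 = 1 / (y.1 + 2*y.2.1 + y.2.2) := by
    simp only [csF2]; rw [← add_div, show y.1 + (y.2.1 + y.2.2) = 1 by linarith]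
  refine ⟨⟨div_pos h2 hs, div_pos h1 hs, div_pos (by linarith) hs, ?_⟩, hlt, ?_⟩
  · simp only [csF2]; field_simp; linarith
  · simp only [casSel, if_neg (not_le.mpr hlt)]
    rw [e1]
    refine Prod.ext ?_ (Prod.ext ?_ ?_)
    · show (csF2 y).2.1 / _ = y.1
      simp only [csF2]; rw [hcan]
    · show (csF2 y).1 / _ = y.2.1
      simp only [csF2]; rw [hcan]
    · show ((csF2 y).2.2 - (csF2 y).1) / _ = y.2.2
      simp only [csF2]; rw [div_sub_div_same, show y.2.1 + y.2.2 - y.2.1 = y.2.2 by ring, hcan]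

def csEmb (p : ℝ × ℝ) : ℝ × ℝ × ℝ := (p.1, p.2, 1 - p.1 - p.2)

def sCond (M : Matrix (Fin 3) (Fin 3) ℤ) (x : ℝ × ℝ × ℝ) : Prop :=
  if M = csMat₁ then x.2.2 < x.1 else x.1 < x.2.2

lemma casSel_step (x : ℝ × ℝ × ℝ) (hx : Inter3 x) (hne : x.1 ≠ x.2.2) :
    Inter3 (casSel x) ∧ ContinuousAt casSel x := by
  obtain ⟨h1, h2, h3, h4⟩ := hx
  rcases lt_or_gt_of_ne hne with h | h
  · have hd : (0:ℝ) < x.2.1 + x.2.2 := by linarith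
    have hd' : x.2.1 + x.2.2 ≠ 0 := ne_of_gt hd
    constructor
    · simp only [casSel, if_neg (not_le.mpr h)]
      refine ⟨div_pos h2 hd, div_pos h1 hd, div_pos (by linarith) hd, ?_⟩
      field_simp
      ring
    · have hev : ∀ᶠ y in nhds x, casSel y =
          (y.2.1 / (y.2.1 + y.2.2), y.1 / (y.2.1 + y.2.2), (y.2.2 - y.1) / (y.2.1 + y.2.2)) := by
        have hop : IsOpen {y : ℝ × ℝ × ℝ | y.1 < y.2.2} :=
          isOpen_lt (by fun_prop) (by fun_prop)
        filter_upwards [hop.mem_nhds h] with y hy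
        simp only [casSel, if_neg (not_le.mpr hy)]
      have hc : ContinuousAt (fun y : ℝ × ℝ × ℝ =>
          (y.2.1 / (y.2.1 + y.2.2), y.1 / (y.2.1 + y.2.2), (y.2.2 - y.1) / (y.2.1 + y.2.2))) x := by
        refine ContinuousAt.prodMk ?_ (ContinuousAt.prodMk ?_ ?_) <;>
          exact ContinuousAt.div (by fun_prop) (by fun_prop) hd'
      exact hc.congr (Filter.EventuallyEq.symm hev)
  · have hd : (0:ℝ) < x.1 + x.2.1 := by linarith
    have hd' : x.1 + x.2.1 ≠ 0 := ne_of_gt hd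
    constructor
    · simp only [casSel, if_pos h.le]
      refine ⟨div_pos (by linarith) hd, div_pos h3 hd, div_pos h2 hd, ?_⟩
      field_simp
      ring
    · have hev : ∀ᶠ y in nhds x, casSel y =
          ((y.1 - y.2.2) / (y.1 + y.2.1), y.2.2 / (y.1 + y.2.1), y.2.1 / (y.1 + y.2.1)) := by
        have hop : IsOpen {y : ℝ × ℝ × ℝ | y.2.2 < y.1} :=
          isOpen_lt (by fun_prop) (by fun_prop)
        filter_upwards [hop.mem_nhds h] with y hy
        simp only [casSel, if_pos hy.le]
      have hc : ContinuousAt (fun y : ℝ × ℝ × ℝ =>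
          ((y.1 - y.2.2) / (y.1 + y.2.1), y.2.2 / (y.1 + y.2.1), y.2.1 / (y.1 + y.2.1))) x := by
        refine ContinuousAt.prodMk ?_ (ContinuousAt.prodMk ?_ ?_) <;>
          exact ContinuousAt.div (by fun_prop) (by fun_prop) hd'
      exact hc.congr (Filter.EventuallyEq.symm hev)

def csChain (k : ℕ) (Msel : ℕ → Matrix (Fin 3) (Fin 3) ℤ) : ℕ → ℝ × ℝ × ℝ
  | 0 => (1/3, 1/3, 1/3)
  | n+1 => if Msel (k - n) = csMat₁ then csF1 (csChain k Msel n) else csF2 (csChain k Msel n)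

lemma csChain_inter (k : ℕ) (Msel : ℕ → Matrix (Fin 3) (Fin 3) ℤ) (n : ℕ) :
    Inter3 (csChain k Msel n) := by
  induction n with
  | zero =>
    simp only [csChain]
    exact ⟨by norm_num, by norm_num, by norm_num, by norm_num⟩
  | succ n ih =>
    rw [csChain]
    split_ifs
    · exact (csF1_spec _ ih).1
    · exact (csF2_spec _ ih).1

lemma exists_strict (k : ℕ) (Msel : ℕ → Matrix (Fin 3) (Fin 3) ℤ) :
    ∃ x : ℝ × ℝ × ℝ, Inter3 x ∧ ∀ j ≤ k, sCond (Msel j) (casSel^[j] x) := by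
  classical
  refine ⟨csChain k Msel (k+1), csChain_inter k Msel (k+1), ?_⟩
  have hiter : ∀ j ≤ k + 1, casSel^[j] (csChain k Msel (k+1)) = csChain k Msel (k+1-j) := by
    intro j hj
    induction j with
    | zero => rfl
    | succ j ih =>
      have hj' : j ≤ k := by omega
      rw [Function.iterate_succ_apply', ih (by omega)]
      have h1 : k + 1 - j = (k - j) + 1 := by omega
      have h2 : k + 1 - (j+1) = k - j := by omega
      rw [h1, h2, csChain]
      split_ifs
      · exact (csF1_spec _ (csChain_inter k Msel (k-j))).2.2
      · exact (csF2_spec _ (csChain_inter k Msel (k-j))).2.2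
  intro j hj
  rw [hiter j (by omega), show k + 1 - j = (k - j) + 1 by omega, csChain,
    show k - (k - j) = j by omega]
  by_cases h : Msel j = csMat₁
  · rw [if_pos h]
    unfold sCond
    rw [if_pos h]
    exact (csF1_spec _ (csChain_inter k Msel (k-j))).2.1
  · rw [if_neg h]
    unfold sCond
    rw [if_neg h]
    exact (csF2_spec _ (csChain_inter k Msel (k-j))).2.1

lemma iterGood (k : ℕ) (Msel : ℕ → Matrix (Fin 3) (Fin 3) ℤ) (p : ℝ × ℝ)
    (hU : 0 < p.1 ∧ 0 < p.2 ∧ p.1 + p.2 < 1)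
    (hs : ∀ j ≤ k, sCond (Msel j) (casSel^[j] (csEmb p))) :
    ∀ j ≤ k + 1, Inter3 (casSel^[j] (csEmb p)) ∧
      ContinuousAt (fun q => casSel^[j] (csEmb q)) p := by
  intro j
  induction j with
  | zero =>
    intro _
    refine ⟨⟨hU.1, hU.2.1, ?_, ?_⟩, ?_⟩
    · show (0:ℝ) < 1 - p.1 - p.2; linarith [hU.2.2]
    · show p.1 + p.2 + (1 - p.1 - p.2) = 1; ring
    · show ContinuousAt (fun q => casSel^[0] (csEmb q)) p
      simp only [Function.iterate_zero, id_eq]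
      unfold csEmb
      fun_prop
  | succ j ih =>
    intro hj
    have hj' : j ≤ k := by omega
    obtain ⟨hI, hC⟩ := ih (by omega)
    have hne : (casSel^[j] (csEmb p)).1 ≠ (casSel^[j] (csEmb p)).2.2 := by
      have hsj := hs j hj'
      unfold sCond at hsj
      split_ifs at hsj
      · exact (ne_of_lt hsj).symm
      · exact ne_of_lt hsj
    obtain ⟨hI2, hC2⟩ := casSel_step _ hI hne
    refine ⟨?_, ?_⟩
    · rw [Function.iterate_succ_apply']; exact hI2
    · have heq : (fun q => casSel^[j+1] (csEmb q)) = fun q => casSel (casSel^[j] (csEmb q)) := by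
        funext q; rw [Function.iterate_succ_apply']
      rw [heq]
      exact ContinuousAt.comp (x := p) hC2 hC

theorem stmt12aux (k : ℕ) (Msel : ℕ → Matrix (Fin 3) (Fin 3) ℤ)
    (hM : ∀ j ≤ k, Msel j = csMat₁ ∨ Msel j = csMat₂) :
    0 < volume ((fun x : ℝ × ℝ × ℝ => (x.1, x.2.1)) ''
      {x | x ∈ {x : ℝ×ℝ×ℝ | 0 ≤ x.1 ∧ 0 ≤ x.2.1 ∧ 0 ≤ x.2.2 ∧ x.1 + x.2.1 + x.2.2 = 1} ∧ ∀ j ≤ k, (if (casSel^[j] x).2.2 ≤ (casSel^[j] x).1 then csMat₁ else csMat₂) = Msel j}) := by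
  classical
  set W : Set (ℝ × ℝ) :=
    {p | 0 < p.1 ∧ 0 < p.2 ∧ p.1 + p.2 < 1} ∩
      ⋂ j ∈ Finset.Iic k, {p | sCond (Msel j) (casSel^[j] (csEmb p))} with hWdef
  have hWmem : ∀ p : ℝ × ℝ, p ∈ W ↔
      (0 < p.1 ∧ 0 < p.2 ∧ p.1 + p.2 < 1) ∧
        ∀ j ≤ k, sCond (Msel j) (casSel^[j] (csEmb p)) := by
    intro p
    simp [hWdef, Set.mem_iInter, Finset.mem_Iic]
  -- W is open
  have hWopen : IsOpen W := by
    rw [isOpen_iff_mem_nhds]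
    intro p hp
    obtain ⟨hU, hs⟩ := (hWmem p).1 hp
    have hg := iterGood k Msel p hU hs
    refine Filter.inter_mem ?_ ?_
    · refine IsOpen.mem_nhds ?_ hU
      have : {p : ℝ × ℝ | 0 < p.1 ∧ 0 < p.2 ∧ p.1 + p.2 < 1} =
          {p : ℝ × ℝ | 0 < p.1} ∩ ({p | 0 < p.2} ∩ {p | p.1 + p.2 < 1}) := by
        ext q; simp [Set.mem_inter_iff, and_assoc]
      rw [this]
      exact (isOpen_lt continuous_const continuous_fst).inter
        ((isOpen_lt continuous_const continuous_snd).inter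
          (isOpen_lt (by fun_prop) continuous_const))
    · rw [Filter.biInter_finset_mem]
      intro j hj
      have hjk : j ≤ k := Finset.mem_Iic.mp hj
      have hO : IsOpen {x : ℝ × ℝ × ℝ | sCond (Msel j) x} := by
        by_cases h : Msel j = csMat₁
        · simp only [sCond, if_pos h]
          exact isOpen_lt (by fun_prop) (by fun_prop)
        · simp only [sCond, if_neg h]
          exact isOpen_lt (by fun_prop) (by fun_prop)
      exact ContinuousAt.preimage_mem_nhds (hg j (by omega)).2 (hO.mem_nhds (hs j hjk))
  -- W is nonempty
  obtain ⟨x₀, hx₀I, hx₀s⟩ := exists_strict k Msel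
  have hembx₀ : csEmb (x₀.1, x₀.2.1) = x₀ := by
    obtain ⟨h1, h2, h3, h4⟩ := hx₀I
    refine Prod.ext rfl (Prod.ext rfl ?_)
    show 1 - x₀.1 - x₀.2.1 = x₀.2.2
    linarith
  have hWne : W.Nonempty := by
    refine ⟨(x₀.1, x₀.2.1), (hWmem _).2 ⟨⟨hx₀I.1, hx₀I.2.1, ?_⟩, ?_⟩⟩
    · obtain ⟨h1, h2, h3, h4⟩ := hx₀I; show x₀.1 + x₀.2.1 < 1; linarith
    · intro j hj; rw [hembx₀]; exact hx₀s j hj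
  -- W is contained in the projected cylinder
  have hsub : W ⊆ (fun x : ℝ × ℝ × ℝ => (x.1, x.2.1)) ''
      {x | x ∈ {x : ℝ×ℝ×ℝ | 0 ≤ x.1 ∧ 0 ≤ x.2.1 ∧ 0 ≤ x.2.2 ∧ x.1 + x.2.1 + x.2.2 = 1} ∧
        ∀ j ≤ k, (if (casSel^[j] x).2.2 ≤ (casSel^[j] x).1 then csMat₁ else csMat₂) = Msel j} := by
    intro p hp
    obtain ⟨hU, hs⟩ := (hWmem p).1 hp
    refine ⟨csEmb p, ⟨⟨hU.1.le, hU.2.1.le, ?_, ?_⟩, ?_⟩, rfl⟩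
    · show (0:ℝ) ≤ 1 - p.1 - p.2; linarith [hU.2.2]
    · show p.1 + p.2 + (1 - p.1 - p.2) = 1; ring
    · intro j hj
      have hsj := hs j hj
      rcases hM j hj with h | h
      · rw [h]
        unfold sCond at hsj
        rw [if_pos h] at hsj
        rw [if_pos hsj.le]
      · rw [h]
        have hne : Msel j ≠ csMat₁ := by rw [h]; exact fun hh => csMat_ne hh.symm
        unfold sCond at hsj
        rw [if_neg hne] at hsj
        rw [if_neg (not_le.mpr hsj)]
  calc (0 : ENNReal) < volume W := hWopen.measure_pos volume hWne
    _ ≤ _ := measure_mono hsub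

theorem stmt12 (k : ℕ) (Msel : ℕ → Matrix (Fin 3) (Fin 3) ℤ)
    (hM : ∀ j ≤ k, Msel j = csMat₁ ∨ Msel j = csMat₂) :
    0 < volume ((fun x : ℝ × ℝ × ℝ => (x.1, x.2.1)) ''
      {x | x ∈ csSimplex ∧ ∀ j ≤ k, csA (casSel^[j] x) = Msel j}) := by
  exact stmt12aux k Msel hM
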